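/- Let L be symmetric p.s.d., Q a well-mapped surjective coarsening with Π = Q^+Q, R ⊆ ℝ^N a subspace, S ∈ ℝ^{N×N}, and ε = sup_{x∈R, ‖x‖_L=1} ‖x − Πx‖_L. Assume both Π and S preserve ker(L), and S preserves R. Define S_c^MP = Q S Q^+. Then for all x ∈ R: ‖S x − Q^+ S_c^MP Q x‖_L ≤ ε ‖x‖_L (‖S‖_L + ‖ΠS‖_L), where ‖M‖_L = ‖L^{1/2} M L^{-1/2}‖. -/

import Mathlib

open Matrix Finset

noncomputable section

def IsMoorePenrose {m N : ℕ} (Q : Matrix (Fin m) (Fin N) ℝ)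
    (P : Matrix (Fin N) (Fin m) ℝ) : Prop :=
  Q * P * Q = Q ∧ P * Q * P = P ∧ (Q * P)ᵀ = Q * P ∧ (P * Q)ᵀ = P * Q

def WellMappedSurjective {m N : ℕ} (Q : Matrix (Fin m) (Fin N) ℝ) : Prop :=
  (∀ k i, 0 ≤ Q k i) ∧ (∀ i, ∃! k, Q k i ≠ 0) ∧ (∀ k, ∃ i, Q k i ≠ 0)

def lnorm {M : ℕ} (L : Matrix (Fin M) (Fin M) ℝ) (x : Fin M → ℝ) : ℝ :=
  Real.sqrt (x ⬝ᵥ (L *ᵥ x))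

def opNorm {M : ℕ} (B : Matrix (Fin M) (Fin M) ℝ) : ℝ :=
  ‖(Matrix.toEuclideanCLM (𝕜 := ℝ) (n := Fin M) B)‖

/-- The positive semidefinite square root of a positive semidefinite matrix
(the definition of `Matrix.PosSemidef.sqrt` in the older Mathlib, removed since). -/
def Matrix.PosSemidef.sqrt {n : Type*} [Fintype n] [DecidableEq n] {A : Matrix n n ℝ}
    (hA : A.PosSemidef) : Matrix n n ℝ :=
  hA.1.eigenvectorUnitary.1 * diagonal ((↑) ∘ (√·) ∘ hA.1.eigenvalues) *
    (star hA.1.eigenvectorUnitary : Matrix n n ℝ)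

section sqrtPort
open scoped MatrixOrder

private lemma sqrt_eq_cfcSqrt' {n : Type*} [Fintype n] [DecidableEq n] {A : Matrix n n ℝ}
    (hA : A.PosSemidef) : hA.sqrt = CFC.sqrt A := by
  have h0 : (0 : Matrix n n ℝ) ≤ A := Matrix.nonneg_iff_posSemidef.mpr hA
  rw [CFC.sqrt_eq_real_sqrt A h0, cfcₙ_eq_cfc, hA.1.cfc_eq, IsHermitian.cfc,
    Unitary.conjStarAlgAut_apply]
  rfl

lemma Matrix.PosSemidef.posSemidef_sqrt {n : Type*} [Fintype n] [DecidableEq n]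
    {A : Matrix n n ℝ} (hA : A.PosSemidef) : hA.sqrt.PosSemidef := by
  rw [sqrt_eq_cfcSqrt' hA]
  exact Matrix.nonneg_iff_posSemidef.mp (CFC.sqrt_nonneg A)

lemma Matrix.PosSemidef.sqrt_mul_self {n : Type*} [Fintype n] [DecidableEq n]
    {A : Matrix n n ℝ} (hA : A.PosSemidef) : hA.sqrt * hA.sqrt = A := by
  rw [sqrt_eq_cfcSqrt' hA]
  exact CFC.sqrt_mul_sqrt_self A (Matrix.nonneg_iff_posSemidef.mpr hA)

lemma Matrix.PosSemidef.eq_sqrt_of_sq_eq {n : Type*} [Fintype n] [DecidableEq n]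
    {A B : Matrix n n ℝ} (hA : A.PosSemidef) (hB : B.PosSemidef) (h : A ^ 2 = B) :
    A = hB.sqrt := by
  rw [sqrt_eq_cfcSqrt' hB, ← h]
  exact (CFC.sqrt_sq A (Matrix.nonneg_iff_posSemidef.mpr hA)).symm

end sqrtPort

private lemma mulVec_ext' {N : ℕ} {A B : Matrix (Fin N) (Fin N) ℝ}
    (h : ∀ v, A *ᵥ v = B *ᵥ v) : A = B := by
  ext i j
  have := congrFun (h (Pi.single j 1)) i
  simpa [Matrix.mulVec_single] using this

private lemma dot_sym' {N : ℕ} {A : Matrix (Fin N) (Fin N) ℝ} (hA : Aᵀ = A)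
    (u w : Fin N → ℝ) : (A *ᵥ u) ⬝ᵥ w = u ⬝ᵥ (A *ᵥ w) := by
  rw [Matrix.dotProduct_mulVec, ← Matrix.vecMul_transpose, hA]

private lemma symm_real {N : ℕ} {A : Matrix (Fin N) (Fin N) ℝ} (hA : A.IsHermitian) :
    Aᵀ = A := hA

private lemma sqrt_kernel {N : ℕ} {L : Matrix (Fin N) (Fin N) ℝ} (hL : L.PosSemidef)
    {v : Fin N → ℝ} (h : L *ᵥ v = 0) : hL.sqrt *ᵥ v = 0 := by
  have hs : hL.sqrtᵀ = hL.sqrt := symm_real hL.posSemidef_sqrt.1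
  have h1 : (hL.sqrt *ᵥ v) ⬝ᵥ (hL.sqrt *ᵥ v) = v ⬝ᵥ (L *ᵥ v) := by
    rw [dot_sym' hs, Matrix.mulVec_mulVec, hL.sqrt_mul_self]
  rw [h, dotProduct_zero] at h1
  exact dotProduct_self_eq_zero.mp h1

private lemma lnorm_eq_zero_of_kernel {N : ℕ} {L : Matrix (Fin N) (Fin N) ℝ}
    {v : Fin N → ℝ} (h : L *ᵥ v = 0) : lnorm L v = 0 := by
  simp [lnorm, h]

/-- The key structural fact: `√L · √(L⁺) = L L⁺ = √(L⁺) · √L`. -/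
private lemma sqrt_mul_sqrt_pinv {N : ℕ} {L Lplus : Matrix (Fin N) (Fin N) ℝ}
    (hL : L.PosSemidef) (hLplus : Lplus.PosSemidef) (hMP : IsMoorePenrose L Lplus) :
    hL.sqrt * hLplus.sqrt = L * Lplus ∧ hLplus.sqrt * hL.sqrt = L * Lplus := by
  set A := hL.sqrt with hAdef
  set B := hLplus.sqrt with hBdef
  set E := L * Lplus with hEdef
  have hLt : Lᵀ = L := symm_real hL.1
  have hLpt : Lplusᵀ = Lplus := symm_real hLplus.1
  have hAt : Aᵀ = A := symm_real hL.posSemidef_sqrt.1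
  have hBt : Bᵀ = B := symm_real hLplus.posSemidef_sqrt.1
  have hEt : Eᵀ = E := hMP.2.2.1
  have hEE : E * E = E := by
    have : L * Lplus * L * Lplus = L * Lplus := by rw [hMP.1]
    simpa [hEdef, Matrix.mul_assoc] using this
  have hEL : E * L = L := hMP.1
  have hLE : L * E = L := by
    have h1 : (L * E)ᵀ = L := by rw [Matrix.transpose_mul, hEt, hLt, hEL]
    calc L * E = ((L * E)ᵀ)ᵀ := by rw [Matrix.transpose_transpose]
    _ = Lᵀ := by rw [h1]
    _ = L := hLt
  have hLpE : Lplus * E = Lplus := by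
    have : Lplus * L * Lplus = Lplus := hMP.2.1
    simpa [hEdef, Matrix.mul_assoc] using this
  have hELp : E * Lplus = Lplus := by
    have h1 : (E * Lplus)ᵀ = Lplus := by rw [Matrix.transpose_mul, hEt, hLpt, hLpE]
    calc E * Lplus = ((E * Lplus)ᵀ)ᵀ := by rw [Matrix.transpose_transpose]
    _ = Lplusᵀ := by rw [h1]
    _ = Lplus := hLpt
  have hAE : A * E = A := by
    apply mulVec_ext'
    intro v
    have hker : L *ᵥ (E *ᵥ v - v) = 0 := by
      rw [Matrix.mulVec_sub, Matrix.mulVec_mulVec, hLE, sub_self]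
    have h4 : A *ᵥ (E *ᵥ v - v) = 0 := sqrt_kernel hL hker
    rw [Matrix.mulVec_sub] at h4
    rw [← Matrix.mulVec_mulVec]
    exact sub_eq_zero.mp h4
  have hEA : E * A = A := by
    have h1 : (E * A)ᵀ = A := by rw [Matrix.transpose_mul, hEt, hAt, hAE]
    calc E * A = ((E * A)ᵀ)ᵀ := by rw [Matrix.transpose_transpose]
    _ = Aᵀ := by rw [h1]
    _ = A := hAt
  have hBE : B * E = B := by
    apply mulVec_ext'
    intro v
    have hker : Lplus *ᵥ (E *ᵥ v - v) = 0 := by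
      rw [Matrix.mulVec_sub, Matrix.mulVec_mulVec, hLpE, sub_self]
    have h4 : B *ᵥ (E *ᵥ v - v) = 0 := sqrt_kernel hLplus hker
    rw [Matrix.mulVec_sub] at h4
    rw [← Matrix.mulVec_mulVec]
    exact sub_eq_zero.mp h4
  have hEB : E * B = B := by
    have h1 : (E * B)ᵀ = B := by rw [Matrix.transpose_mul, hEt, hBt, hBE]
    calc E * B = ((E * B)ᵀ)ᵀ := by rw [Matrix.transpose_transpose]
    _ = Bᵀ := by rw [h1]
    _ = B := hBt
  set C := A + (1 - E) with hCdef
  set D := B + (1 - E) with hDdef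
  have hFF : (1 - E) * (1 - E) = 1 - E := by
    simp only [mul_sub, sub_mul, mul_one, one_mul, hEE]
    abel
  have hC2 : C * C = L + (1 - E) := by
    simp only [hCdef, mul_add, add_mul, mul_sub, sub_mul, mul_one, one_mul, hAE, hEA, hEE,
      (show A * A = L from hL.sqrt_mul_self)]
    abel
  have hD2 : D * D = Lplus + (1 - E) := by
    simp only [hDdef, mul_add, add_mul, mul_sub, sub_mul, mul_one, one_mul, hBE, hEB, hEE,
      (show B * B = Lplus from hLplus.sqrt_mul_self)]
    abel
  have hCD2 : (C * C) * (D * D) = 1 := by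
    rw [hC2, hD2]
    simp only [mul_add, add_mul, mul_sub, sub_mul, mul_one, one_mul, hLE, hELp, hEE, ← hEdef]
    abel
  have hFpsd : (1 - E).PosSemidef := by
    refine Matrix.PosSemidef.of_dotProduct_mulVec_nonneg ?_ ?_
    · show (1 - E)ᴴ = 1 - E
      have : (1 - E)ᴴ = (1 - E)ᵀ := rfl
      rw [this, Matrix.transpose_sub, Matrix.transpose_one, hEt]
    · intro v
      have hFt : (1 - E)ᵀ = 1 - E := by rw [Matrix.transpose_sub, Matrix.transpose_one, hEt]
      have : (star v) ⬝ᵥ ((1 - E) *ᵥ v) = ((1 - E) *ᵥ v) ⬝ᵥ ((1 - E) *ᵥ v) := by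
        rw [star_trivial, dot_sym' hFt, Matrix.mulVec_mulVec, hFF]
      rw [this]
      exact Finset.sum_nonneg fun i _ => mul_self_nonneg _
  have hCpsd : C.PosSemidef := hL.posSemidef_sqrt.add hFpsd
  have hDpsd : D.PosSemidef := hLplus.posSemidef_sqrt.add hFpsd
  have hCdet : IsUnit C.det := by
    have h1 : IsUnit (C * C).det := Matrix.isUnit_det_of_right_inverse hCD2
    rw [Matrix.det_mul] at h1
    exact isUnit_of_mul_isUnit_left h1
  have hD2eq : D * D = C⁻¹ * C⁻¹ := by
    have h1 : (C * C)⁻¹ = D * D := Matrix.inv_eq_right_inv hCD2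
    rw [← h1, Matrix.mul_inv_rev]
  have hCinvpsd : (C⁻¹).PosSemidef := hCpsd.inv
  have hDeq : D = C⁻¹ := by
    have hsq : (C⁻¹ * C⁻¹).PosSemidef := by
      have := hCinvpsd.pow 2
      rwa [pow_two] at this
    have h1 : D = hsq.sqrt := hDpsd.eq_sqrt_of_sq_eq hsq (by rw [pow_two]; exact hD2eq)
    have h2 : C⁻¹ = hsq.sqrt := hCinvpsd.eq_sqrt_of_sq_eq hsq (by rw [pow_two])
    exact h1.trans h2.symm
  have hCD : C * D = 1 := by rw [hDeq]; exact Matrix.mul_nonsing_inv _ hCdet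
  have hA1E : A * (1 - E) = 0 := by rw [mul_sub, mul_one, hAE, sub_self]
  have h1EB : (1 - E) * B = 0 := by rw [sub_mul, one_mul, hEB, sub_self]
  have hC1E : C * (1 - E) = 1 - E := by
    rw [hCdef, add_mul, hA1E, hFF, zero_add]
  have h1ED : (1 - E) * D = 1 - E := by
    rw [hDdef, mul_add, h1EB, hFF, zero_add]
  have hAeq : A = C - (1 - E) := by rw [hCdef]; abel
  have hBeq : B = D - (1 - E) := by rw [hDdef]; abel
  have hAB : A * B = E := by
    rw [hAeq, hBeq, sub_mul, mul_sub, hCD, hC1E, mul_sub, h1ED, hFF, sub_self, sub_zero]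
    exact sub_sub_cancel 1 E
  have hBA : B * A = E := by
    have h1 : (A * B)ᵀ = B * A := by rw [Matrix.transpose_mul, hAt, hBt]
    rw [← h1, hAB, hEt]
  exact ⟨hAB, hBA⟩

private lemma euc_norm_eq {N : ℕ} (u : Fin N → ℝ) :
    ‖(WithLp.equiv 2 (Fin N → ℝ)).symm u‖ = Real.sqrt (u ⬝ᵥ u) := by
  rw [EuclideanSpace.norm_eq]
  congr 1
  simp [Real.norm_eq_abs, sq_abs, dotProduct, pow_two]

private lemma lnorm_eq {N : ℕ} {L : Matrix (Fin N) (Fin N) ℝ} (hL : L.PosSemidef)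
    (w : Fin N → ℝ) :
    lnorm L w = ‖(WithLp.equiv 2 (Fin N → ℝ)).symm (hL.sqrt *ᵥ w)‖ := by
  have hAt : hL.sqrtᵀ = hL.sqrt := symm_real hL.posSemidef_sqrt.1
  have h : (hL.sqrt *ᵥ w) ⬝ᵥ (hL.sqrt *ᵥ w) = w ⬝ᵥ (L *ᵥ w) := by
    rw [dot_sym' hAt, Matrix.mulVec_mulVec, hL.sqrt_mul_self]
  rw [lnorm, euc_norm_eq, h]

private lemma lnorm_add_le {N : ℕ} {L : Matrix (Fin N) (Fin N) ℝ} (hL : L.PosSemidef)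
    (a b : Fin N → ℝ) : lnorm L (a + b) ≤ lnorm L a + lnorm L b := by
  rw [lnorm_eq hL, lnorm_eq hL, lnorm_eq hL, Matrix.mulVec_add, WithLp.equiv_symm_apply, WithLp.toLp_add]
  exact norm_add_le _ _

private lemma kernel_of_lnorm_eq_zero {N : ℕ} {L : Matrix (Fin N) (Fin N) ℝ}
    (hL : L.PosSemidef) {v : Fin N → ℝ} (h : lnorm L v = 0) : L *ᵥ v = 0 := by
  rw [lnorm_eq hL, norm_eq_zero] at h
  have h2 : hL.sqrt *ᵥ v = 0 := by
    have := congrArg (WithLp.equiv 2 (Fin N → ℝ)) h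
    simpa using this
  rw [← hL.sqrt_mul_self, ← Matrix.mulVec_mulVec, h2, Matrix.mulVec_zero]

set_option maxHeartbeats 1600000 in
private lemma opNorm_bound {N : ℕ} {L Lplus : Matrix (Fin N) (Fin N) ℝ}
    (hL : L.PosSemidef) (hLplus : Lplus.PosSemidef) (hMP : IsMoorePenrose L Lplus)
    (M : Matrix (Fin N) (Fin N) ℝ)
    (hM : ∀ v, L *ᵥ v = 0 → L *ᵥ (M *ᵥ v) = 0) (v : Fin N → ℝ) :
    lnorm L (M *ᵥ v) ≤ opNorm (hL.sqrt * M * hLplus.sqrt) * lnorm L v := by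
  obtain ⟨hAB, hBA⟩ := sqrt_mul_sqrt_pinv hL hLplus hMP
  set A := hL.sqrt with hAdef
  set B := hLplus.sqrt with hBdef
  have hLt : Lᵀ = L := symm_real hL.1
  have hEt : (L * Lplus)ᵀ = L * Lplus := hMP.2.2.1
  have hEL : (L * Lplus) * L = L := hMP.1
  have hLE : L * (L * Lplus) = L := by
    have h1 : (L * (L * Lplus))ᵀ = L := by rw [Matrix.transpose_mul, hEt, hLt, hEL]
    calc L * (L * Lplus) = ((L * (L * Lplus))ᵀ)ᵀ := by rw [Matrix.transpose_transpose]
    _ = Lᵀ := by rw [h1]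
    _ = L := hLt
  have hstep : A *ᵥ (M *ᵥ v) = (A * M * B) *ᵥ (A *ᵥ v) := by
    have hmat : A * M * B * A = A * M * (L * Lplus) := by
      rw [Matrix.mul_assoc (A * M) B A, hBA]
    have h1 : (A * M * B) *ᵥ (A *ᵥ v) = A *ᵥ (M *ᵥ ((L * Lplus) *ᵥ v)) := by
      rw [Matrix.mulVec_mulVec, Matrix.mulVec_mulVec, Matrix.mulVec_mulVec, hmat]
    have h2 : L *ᵥ ((L * Lplus) *ᵥ v - v) = 0 := by
      rw [Matrix.mulVec_sub, Matrix.mulVec_mulVec, hLE, sub_self]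
    have h4 : A *ᵥ (M *ᵥ ((L * Lplus) *ᵥ v - v)) = 0 := sqrt_kernel hL (hM _ h2)
    rw [Matrix.mulVec_sub, Matrix.mulVec_sub] at h4
    rw [h1]
    exact (sub_eq_zero.mp h4).symm
  rw [lnorm_eq hL, lnorm_eq hL, hstep]
  have hclm : (WithLp.equiv 2 (Fin N → ℝ)).symm ((A * M * B) *ᵥ (A *ᵥ v)) =
      (Matrix.toEuclideanCLM (𝕜 := ℝ) (n := Fin N) (A * M * B))
        ((WithLp.equiv 2 (Fin N → ℝ)).symm (A *ᵥ v)) := by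
    rw [WithLp.equiv_symm_apply, Matrix.toEuclideanCLM_toLp]
  rw [hclm]
  exact ContinuousLinearMap.le_opNorm _ _

set_option maxHeartbeats 1600000 in
theorem stmt_8 {m N : ℕ} (L S : Matrix (Fin N) (Fin N) ℝ) (hL : L.PosSemidef)
    (Lplus : Matrix (Fin N) (Fin N) ℝ) (hLplusMP : IsMoorePenrose L Lplus)
    (hLplus : Lplus.PosSemidef)
    (Q : Matrix (Fin m) (Fin N) ℝ) (P : Matrix (Fin N) (Fin m) ℝ)
    (hQ : WellMappedSurjective Q) (hP : IsMoorePenrose Q P)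
    (R : Submodule ℝ (Fin N → ℝ)) (ε : ℝ)
    -- RSA property: `‖x − Πx‖_L ≤ ε ‖x‖_L` on `R`, with `Π = Q⁺Q = P * Q`
    (hε : ∀ x ∈ R, lnorm L (x - (P * Q) *ᵥ x) ≤ ε * lnorm L x)
    -- `Π` and `S` preserve `ker L`
    (hkerProj : ∀ x : Fin N → ℝ, L *ᵥ x = 0 → L *ᵥ ((P * Q) *ᵥ x) = 0)
    (hkerS : ∀ x : Fin N → ℝ, L *ᵥ x = 0 → L *ᵥ (S *ᵥ x) = 0)
    -- `S` preserves `R`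
    (hSR : ∀ x ∈ R, S *ᵥ x ∈ R) :
    ∀ x ∈ R,
      lnorm L (S *ᵥ x - P *ᵥ ((Q * S * P) *ᵥ (Q *ᵥ x)))
        ≤ ε * lnorm L x *
          (opNorm (hL.sqrt * S * hLplus.sqrt) +
            opNorm (hL.sqrt * ((P * Q) * S) * hLplus.sqrt)) := by
  intro x hx
  by_cases hx0 : L *ᵥ x = 0
  · have h1 : L *ᵥ (S *ᵥ x) = 0 := hkerS x hx0
    have h2 : L *ᵥ ((P * Q) *ᵥ x) = 0 := hkerProj x hx0
    have h3 : L *ᵥ (S *ᵥ ((P * Q) *ᵥ x)) = 0 := hkerS _ h2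
    have h4 : L *ᵥ ((P * Q) *ᵥ (S *ᵥ ((P * Q) *ᵥ x))) = 0 := hkerProj _ h3
    have heq : P *ᵥ ((Q * S * P) *ᵥ (Q *ᵥ x)) = (P * Q) *ᵥ (S *ᵥ ((P * Q) *ᵥ x)) := by
      simp only [Matrix.mulVec_mulVec, Matrix.mul_assoc]
    have h5 : L *ᵥ (S *ᵥ x - P *ᵥ ((Q * S * P) *ᵥ (Q *ᵥ x))) = 0 := by
      rw [Matrix.mulVec_sub, heq, h1, h4, sub_self]
    rw [lnorm_eq_zero_of_kernel h5, lnorm_eq_zero_of_kernel hx0]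
    simp
  · have hlx : 0 < lnorm L x := by
      rcases lt_or_eq_of_le (Real.sqrt_nonneg (x ⬝ᵥ (L *ᵥ x))) with h | h
      · exact h
      · exact absurd (kernel_of_lnorm_eq_zero hL h.symm) hx0
    have hε0 : 0 ≤ ε := by
      have h1 := hε x hx
      have h0 : 0 ≤ lnorm L (x - (P * Q) *ᵥ x) := Real.sqrt_nonneg _
      nlinarith
    have hgoal : S *ᵥ x - P *ᵥ ((Q * S * P) *ᵥ (Q *ᵥ x)) =
        (S *ᵥ x - (P * Q) *ᵥ (S *ᵥ x)) + ((P * Q) * S) *ᵥ (x - (P * Q) *ᵥ x) := by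
      simp only [Matrix.mulVec_sub, Matrix.mulVec_mulVec, Matrix.mul_assoc]
      abel
    rw [hgoal]
    have hb1 : lnorm L (S *ᵥ x - (P * Q) *ᵥ (S *ᵥ x)) ≤ ε * lnorm L (S *ᵥ x) :=
      hε _ (hSR x hx)
    have hb2 : lnorm L (S *ᵥ x) ≤ opNorm (hL.sqrt * S * hLplus.sqrt) * lnorm L x :=
      opNorm_bound hL hLplus hLplusMP S hkerS x
    have hker2 : ∀ v, L *ᵥ v = 0 → L *ᵥ (((P * Q) * S) *ᵥ v) = 0 := by
      intro v hv
      rw [← Matrix.mulVec_mulVec]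
      exact hkerProj _ (hkerS _ hv)
    have hb3 : lnorm L (((P * Q) * S) *ᵥ (x - (P * Q) *ᵥ x)) ≤
        opNorm (hL.sqrt * ((P * Q) * S) * hLplus.sqrt) * lnorm L (x - (P * Q) *ᵥ x) :=
      opNorm_bound hL hLplus hLplusMP _ hker2 _
    have hb4 : lnorm L (x - (P * Q) *ᵥ x) ≤ ε * lnorm L x := hε x hx
    have hop1 : (0:ℝ) ≤ opNorm (hL.sqrt * S * hLplus.sqrt) := norm_nonneg _
    have hop2 : (0:ℝ) ≤ opNorm (hL.sqrt * ((P * Q) * S) * hLplus.sqrt) := norm_nonneg _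
    have hA1 : lnorm L (S *ᵥ x - (P * Q) *ᵥ (S *ᵥ x)) ≤
        ε * (opNorm (hL.sqrt * S * hLplus.sqrt) * lnorm L x) :=
      hb1.trans (mul_le_mul_of_nonneg_left hb2 hε0)
    have hA2 : lnorm L (((P * Q) * S) *ᵥ (x - (P * Q) *ᵥ x)) ≤
        opNorm (hL.sqrt * ((P * Q) * S) * hLplus.sqrt) * (ε * lnorm L x) :=
      hb3.trans (mul_le_mul_of_nonneg_left hb4 hop2)
    calc lnorm L ((S *ᵥ x - (P * Q) *ᵥ (S *ᵥ x)) + ((P * Q) * S) *ᵥ (x - (P * Q) *ᵥ x))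
        ≤ lnorm L (S *ᵥ x - (P * Q) *ᵥ (S *ᵥ x)) +
          lnorm L (((P * Q) * S) *ᵥ (x - (P * Q) *ᵥ x)) := lnorm_add_le hL _ _
      _ ≤ ε * (opNorm (hL.sqrt * S * hLplus.sqrt) * lnorm L x) +
          opNorm (hL.sqrt * ((P * Q) * S) * hLplus.sqrt) * (ε * lnorm L x) :=
        add_le_add hA1 hA2
      _ = ε * lnorm L x *
          (opNorm (hL.sqrt * S * hLplus.sqrt) +
            opNorm (hL.sqrt * ((P * Q) * S) * hLplus.sqrt)) := by ring
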